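/- Let X = (x_0,…,x_{N−1}) be a completely ordered unisolvent array of points in ℂ^p. Then for each 1 ≤ j ≤ N−1 there exist (unique) complex numbers c^{(j)}_0,…,c^{(j)}_{j−1} such that e_j(x_i) = ∑_{t=0}^{j−1} c^{(j)}_t e_t(x_i) for all 0 ≤ i ≤ j−1 (i.e. ∑_t c^{(j)}_t e_t is the Lagrange interpolant L_{X_j}e_j of e_j at x_0,…,x_{j−1}), and vdm(x_0,…,x_{N−1}) = ∏_{j=1}^{N−1} ( e_j(x_j) − ∑_{t=0}^{j−1} c^{(j)}_t e_t(x_j) ). -/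

import Mathlib

open scoped BigOperators
open Filter

namespace PseudoLeja

/-- Graded lexicographic strict order on multi-indices in `ℕ^p`:
`α ≺ β` iff `|α| < |β|`, or `|α| = |β|` and the leftmost nonzero entry of `α - β`
is negative (i.e. at the first index where they differ, `α` is smaller). -/
def GLexLT {p : ℕ} (α β : Fin p → ℕ) : Prop :=
  (∑ i, α i) < (∑ i, β i) ∨
    ((∑ i, α i) = (∑ i, β i) ∧ ∃ k, (∀ i, i < k → α i = β i) ∧ α k < β k)

/-- `κ : ℕ → ℕ^p` is the (unique) enumeration of all multi-indices that is strictly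
increasing from the usual order on `ℕ` to the graded lexicographic order. -/
def IsGLexEnum {p : ℕ} (κ : ℕ → Fin p → ℕ) : Prop :=
  Function.Bijective κ ∧ ∀ m n : ℕ, m < n → GLexLT (κ m) (κ n)

/-- The `N`-th monomial `e_N(z) = z^{κ(N)}`. -/
noncomputable def mono {p : ℕ} (κ : ℕ → Fin p → ℕ) (N : ℕ) (z : Fin p → ℂ) : ℂ :=
  ∏ i, z i ^ κ N i

/-- Vandermonde determinant of the points `ξ 0, …, ξ (n-1)`:
`vdm κ n ξ = det [e_N(ξ_M)]_{0 ≤ M, N ≤ n-1}`. -/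
noncomputable def vdm {p : ℕ} (κ : ℕ → Fin p → ℕ) (n : ℕ) (ξ : ℕ → Fin p → ℂ) : ℂ :=
  Matrix.det (Matrix.of fun M N : Fin n => mono κ (N : ℕ) (ξ (M : ℕ)))

/-- A set `K ⊆ ℂ^p` is determining if no nonzero polynomial in `p` complex
variables vanishes identically on `K`. -/
def Determining {p : ℕ} (K : Set (Fin p → ℂ)) : Prop :=
  ∀ P : MvPolynomial (Fin p) ℂ, (∀ z ∈ K, MvPolynomial.eval z P = 0) → P = 0

/-- `h_d = C(p+d, d)`, the dimension of the space of polynomials of total degree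
at most `d` in `p` variables. -/
def hdim (p d : ℕ) : ℕ := Nat.choose (p + d) d

/-- `l_d = p·C(p+d, p+1)`, the degree of the Vandermonde determinant of `h_d` points. -/
def ldim (p d : ℕ) : ℕ := p * Nat.choose (p + d) (p + 1)

/-- `V_j(K)`, the maximal modulus of the Vandermonde determinant of `j` points of `K`. -/
noncomputable def Vsup {p : ℕ} (κ : ℕ → Fin p → ℕ) (K : Set (Fin p → ℂ)) (j : ℕ) : ℝ :=
  sSup { v : ℝ | ∃ ξ : ℕ → Fin p → ℂ, (∀ i, ξ i ∈ K) ∧ v = ‖vdm κ j ξ‖ }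

/-- `(ξ_j)_{j≥0} ⊆ K` is a pseudo Leja sequence for `K` with Edrei growth `(M_j)_{j≥1}`:
`M_j ≥ 1`, `M_j·|vdm(ξ_0,…,ξ_j)| ≥ max_{z∈K} |vdm(ξ_0,…,ξ_{j-1},z)|` for `j ≥ 1`, and
`lim_{d→∞} (max_{h_{d-1} ≤ j < h_d} M_j)^{1/d} = 1`. -/
def IsPseudoLeja {p : ℕ} (κ : ℕ → Fin p → ℕ) (K : Set (Fin p → ℂ))
    (ξ : ℕ → Fin p → ℂ) (M : ℕ → ℝ) : Prop :=
  (∀ j, ξ j ∈ K) ∧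
  (∀ j, 1 ≤ j → 1 ≤ M j) ∧
  (∀ j, 1 ≤ j → ∀ z ∈ K,
    ‖vdm κ (j + 1) (Function.update ξ j z)‖ ≤
      M j * ‖vdm κ (j + 1) ξ‖) ∧
  Filter.Tendsto
    (fun d : ℕ => (sSup (M '' Set.Ico (hdim p (d - 1)) (hdim p d))) ^ ((d : ℝ)⁻¹))
    Filter.atTop (nhds 1)

lemma kappa_zero {p : ℕ} (κ : ℕ → Fin p → ℕ) (hκ : IsGLexEnum κ) : κ 0 = 0 := by
  obtain ⟨⟨hinj, hsurj⟩, hmono⟩ := hκ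
  obtain ⟨n, hn⟩ := hsurj 0
  rcases Nat.eq_zero_or_pos n with h | h
  · rwa [h] at hn
  · exfalso
    have h2 := hmono 0 n h
    rw [hn] at h2
    rcases h2 with h1 | ⟨_, k, _, hk⟩
    · simp at h1
    · exact Nat.not_lt_zero _ hk

lemma mono_zero {p : ℕ} (κ : ℕ → Fin p → ℕ) (hκ : IsGLexEnum κ) (z : Fin p → ℂ) :
    mono κ 0 z = 1 := by
  simp [mono, kappa_zero κ hκ]

lemma vdm_succ {p : ℕ} (κ : ℕ → Fin p → ℕ) (X : ℕ → Fin p → ℂ) (j : ℕ)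
    (c : Fin j → ℂ)
    (hc : ∀ i : Fin j, mono κ j (X (i : ℕ)) = ∑ t : Fin j, c t * mono κ (t : ℕ) (X (i : ℕ))) :
    vdm κ (j + 1) X =
      vdm κ j X * (mono κ j (X j) - ∑ t : Fin j, c t * mono κ (t : ℕ) (X j)) := by
  classical
  set M : Matrix (Fin (j + 1)) (Fin (j + 1)) ℂ :=
    Matrix.of fun i t : Fin (j + 1) => mono κ (t : ℕ) (X (i : ℕ)) with hM
  set d : Fin (j + 1) → ℂ := fun t => if h : (t : ℕ) < j then c ⟨t, h⟩ else 0 with hd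
  set B : Matrix (Fin (j + 1)) (Fin (j + 1)) ℂ :=
    Matrix.of fun t s : Fin (j + 1) =>
      if t = s then 1 else if s = Fin.last j then -(d t) else 0 with hB
  have hBtri : B.BlockTriangular id := by
    intro a b hab
    have hab' : (b : Fin (j+1)) < a := hab
    have h1 : a ≠ b := ne_of_gt hab'
    have h2 : b ≠ Fin.last j := by
      intro hb
      rw [hb] at hab'
      exact absurd hab' (not_lt.2 (Fin.le_last a))
    simp [hB, h1, h2]
  have hBdet : B.det = 1 := by
    rw [Matrix.det_of_upperTriangular hBtri]
    simp [hB]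
  have hprod : ∀ i s : Fin (j + 1), (M * B) i s =
      if s = Fin.last j then
        mono κ j (X (i : ℕ)) - ∑ t : Fin j, c t * mono κ (t : ℕ) (X (i : ℕ))
      else mono κ (s : ℕ) (X (i : ℕ)) := by
    intro i s
    rw [Matrix.mul_apply]
    by_cases hs : s = Fin.last j
    · subst hs
      rw [if_pos rfl, Fin.sum_univ_castSucc]
      have hterm : ∀ t : Fin j, M i t.castSucc * B t.castSucc (Fin.last j) =
          -(c t * mono κ (t : ℕ) (X (i : ℕ))) := by
        intro t
        have hne : (t.castSucc : Fin (j+1)) ≠ Fin.last j := Fin.ne_of_lt (Fin.castSucc_lt_last t)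
        have ht : ((t.castSucc : Fin (j+1)) : ℕ) < j := by simpa using t.isLt
        simp only [hM, hB, hd, Matrix.of_apply, if_neg hne, if_pos rfl, dif_pos ht]
        have he : (⟨((t.castSucc : Fin (j+1)) : ℕ), ht⟩ : Fin j) = t := by
          ext; simp
        rw [he, Fin.coe_castSucc]
        simp only [if_true]
        ring
      rw [Finset.sum_congr rfl fun t _ => hterm t]
      simp only [hM, hB, Matrix.of_apply, if_pos rfl, mul_one, Fin.val_last]
      rw [Finset.sum_neg_distrib]
      simp only [if_true]
      ring
    · rw [if_neg hs]
      have hterm : ∀ t : Fin (j+1), M i t * B t s = if t = s then M i s else 0 := by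
        intro t
        by_cases ht : t = s
        · subst ht; simp [hB]
        · simp [hB, ht, hs]
      rw [Finset.sum_congr rfl fun t _ => hterm t, Finset.sum_ite_eq' Finset.univ s]
      simp [hM]
  have hdetMB : (M * B).det = M.det := by rw [Matrix.det_mul, hBdet, mul_one]
  have hexp : (M * B).det =
      vdm κ j X * (mono κ j (X j) - ∑ t : Fin j, c t * mono κ (t : ℕ) (X j)) := by
    rw [Matrix.det_succ_column (M * B) (Fin.last j), Fin.sum_univ_castSucc]
    have hzero : ∀ a : Fin j,
        (-1 : ℂ) ^ ((a.castSucc : ℕ) + (Fin.last j : ℕ)) * (M * B) a.castSucc (Fin.last j) *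
          ((M * B).submatrix a.castSucc.succAbove (Fin.last j).succAbove).det = 0 := by
      intro a
      have : (M * B) a.castSucc (Fin.last j) = 0 := by
        rw [hprod, if_pos rfl]
        simp only [Fin.coe_castSucc]
        rw [sub_eq_zero]
        exact hc a
      rw [this]; ring
    rw [Finset.sum_congr rfl fun a _ => hzero a, Finset.sum_const_zero, zero_add]
    have hsign : (-1 : ℂ) ^ ((Fin.last j : ℕ) + (Fin.last j : ℕ)) = 1 :=
      Even.neg_one_pow ⟨j, by simp⟩
    have hminor : ((M * B).submatrix (Fin.last j).succAbove (Fin.last j).succAbove).det =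
        vdm κ j X := by
      unfold vdm
      congr 1
      ext a b
      rw [Matrix.submatrix_apply, Fin.succAbove_last, hprod,
        if_neg (Fin.ne_of_lt (Fin.castSucc_lt_last b))]
      simp
    rw [hsign, hminor, hprod, if_pos rfl]
    simp only [Fin.val_last]
    ring
  have hMdet : vdm κ (j + 1) X = M.det := rfl
  rw [hMdet, ← hdetMB, hexp]

/-- for a completely ordered unisolvent array `X = (x_0,…,x_{N-1})`
there are (unique) coefficients `c^{(j)}_t` making `∑_{t<j} c^{(j)}_t e_t` the Lagrange
interpolant of `e_j` at `x_0,…,x_{j-1}`, and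
`vdm(x_0,…,x_{N-1}) = ∏_{j=1}^{N-1} (e_j(x_j) - ∑_{t<j} c^{(j)}_t e_t(x_j))`. -/
theorem vdm_eq_prod_newton_remainders {p N : ℕ} (hp : 1 ≤ p)
    (κ : ℕ → Fin p → ℕ) (hκ : IsGLexEnum κ)
    (X : ℕ → Fin p → ℂ)
    (hX : ∀ i : ℕ, 1 ≤ i → i ≤ N → vdm κ i X ≠ 0) :
    ∃ c : ℕ → ℕ → ℂ,
      (∀ j : ℕ, 1 ≤ j → j < N → ∀ i : ℕ, i < j →
        mono κ j (X i) = ∑ t ∈ Finset.range j, c j t * mono κ t (X i)) ∧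
      (∀ c' : ℕ → ℕ → ℂ,
        (∀ j : ℕ, 1 ≤ j → j < N → ∀ i : ℕ, i < j →
          mono κ j (X i) = ∑ t ∈ Finset.range j, c' j t * mono κ t (X i)) →
        ∀ j : ℕ, 1 ≤ j → j < N → ∀ t : ℕ, t < j → c' j t = c j t) ∧
      vdm κ N X =
        ∏ j ∈ Finset.Ico 1 N,
          (mono κ j (X j) - ∑ t ∈ Finset.range j, c j t * mono κ t (X j)) := by
  classical
  let A : (j : ℕ) → Matrix (Fin j) (Fin j) ℂ := fun j =>
    Matrix.of fun i t : Fin j => mono κ (t : ℕ) (X (i : ℕ))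
  let bv : (j : ℕ) → Fin j → ℂ := fun j i => mono κ j (X (i : ℕ))
  let cv : (j : ℕ) → Fin j → ℂ := fun j => (A j)⁻¹.mulVec (bv j)
  let c : ℕ → ℕ → ℂ := fun j t => if h : t < j then cv j ⟨t, h⟩ else 0
  have hcfin : ∀ j (t : Fin j), c j (t : ℕ) = cv j t := by
    intro j t
    simp only [c, dif_pos t.isLt, Fin.eta]
  have hconv : ∀ (j : ℕ) (g : ℕ → ℂ) (z : Fin p → ℂ),
      ∑ t ∈ Finset.range j, g t * mono κ t z = ∑ t : Fin j, g (t : ℕ) * mono κ (t : ℕ) z :=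
    fun j g z => (Fin.sum_univ_eq_sum_range (fun t => g t * mono κ t z) j).symm
  have hu : ∀ j, 1 ≤ j → j ≤ N → IsUnit (A j).det := by
    intro j hj hjN
    exact isUnit_iff_ne_zero.2 (hX j hj hjN)
  have hinterp : ∀ j, 1 ≤ j → j ≤ N → ∀ i : Fin j,
      mono κ j (X (i : ℕ)) = ∑ t : Fin j, cv j t * mono κ (t : ℕ) (X (i : ℕ)) := by
    intro j hj hjN i
    have hmv : (A j).mulVec (cv j) = bv j := by
      show (A j).mulVec ((A j)⁻¹.mulVec (bv j)) = bv j
      rw [Matrix.mulVec_mulVec, Matrix.mul_nonsing_inv _ (hu j hj hjN), Matrix.one_mulVec]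
    have h2 := congrFun hmv i
    simp only [Matrix.mulVec, dotProduct] at h2
    calc mono κ j (X (i : ℕ)) = ∑ t : Fin j, A j i t * cv j t := h2.symm
      _ = ∑ t : Fin j, cv j t * mono κ (t : ℕ) (X (i : ℕ)) :=
        Finset.sum_congr rfl fun t _ => mul_comm _ _
  have huniq : ∀ j, 1 ≤ j → j ≤ N → ∀ v : Fin j → ℂ,
      (∀ i : Fin j, mono κ j (X (i : ℕ)) = ∑ t : Fin j, v t * mono κ (t : ℕ) (X (i : ℕ))) →
      v = cv j := by
    intro j hj hjN v hv
    have hmv : (A j).mulVec v = bv j := by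
      funext i
      show ∑ t : Fin j, A j i t * v t = bv j i
      calc ∑ t : Fin j, A j i t * v t
          = ∑ t : Fin j, v t * mono κ (t : ℕ) (X (i : ℕ)) :=
            Finset.sum_congr rfl fun t _ => mul_comm _ _
        _ = bv j i := (hv i).symm
    calc v = (1 : Matrix (Fin j) (Fin j) ℂ).mulVec v := (Matrix.one_mulVec v).symm
      _ = ((A j)⁻¹ * A j).mulVec v := by rw [Matrix.nonsing_inv_mul _ (hu j hj hjN)]
      _ = (A j)⁻¹.mulVec ((A j).mulVec v) := (Matrix.mulVec_mulVec _ _ _).symm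
      _ = cv j := by rw [hmv]
  refine ⟨c, ?_, ?_, ?_⟩
  · intro j hj hjN i hij
    rw [hconv j (c j) (X i)]
    calc mono κ j (X i) = mono κ j (X ((⟨i, hij⟩ : Fin j) : ℕ)) := rfl
      _ = ∑ t : Fin j, cv j t * mono κ (t : ℕ) (X (((⟨i, hij⟩ : Fin j)) : ℕ)) :=
          hinterp j hj (le_of_lt hjN) ⟨i, hij⟩
      _ = ∑ t : Fin j, c j (t : ℕ) * mono κ (t : ℕ) (X i) :=
          Finset.sum_congr rfl fun t _ => by rw [hcfin]
  · intro c' hc' j hj hjN t ht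
    have hv : ∀ i : Fin j, mono κ j (X (i : ℕ)) =
        ∑ s : Fin j, (fun s : Fin j => c' j (s : ℕ)) s * mono κ (s : ℕ) (X (i : ℕ)) := by
      intro i
      rw [← hconv j (c' j) (X (i : ℕ))]
      exact hc' j hj hjN i i.isLt
    have := huniq j hj (le_of_lt hjN) (fun s : Fin j => c' j (s : ℕ)) hv
    have h2 := congrFun this ⟨t, ht⟩
    simp only at h2
    rw [h2, ← hcfin j ⟨t, ht⟩]
  · have key : ∀ n, n ≤ N → vdm κ n X =
        ∏ j ∈ Finset.Ico 1 n,
          (mono κ j (X j) - ∑ t ∈ Finset.range j, c j t * mono κ t (X j)) := by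
      intro n
      induction n with
      | zero => intro _; simp [vdm]
      | succ n ih =>
        intro hn
        rcases Nat.eq_zero_or_pos n with h0 | h1
        · subst h0
          have : vdm κ 1 X = mono κ 0 (X 0) := by
            show (Matrix.of fun M N : Fin 1 => mono κ (N : ℕ) (X (M : ℕ))).det = _
            rw [Matrix.det_fin_one]
            rfl
          rw [this, mono_zero κ hκ]
          simp
        · have hstep := vdm_succ κ X n (cv n)
            (hinterp n h1 (le_trans (Nat.le_succ n) hn))
          rw [hstep, ih (le_trans (Nat.le_succ n) hn),
            Finset.prod_Ico_succ_top h1]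
          congr 1
          rw [hconv n (c n) (X n)]
          congr 1
          exact Finset.sum_congr rfl fun t _ => by rw [hcfin]
    exact key N le_rfl

end PseudoLeja
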